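/- Let d ≥ 2 be an integer and ε ∈ [0, 1]. Consider the joint distribution of (X, C) where X is uniform on {0,1}^{2d}, C is an independent Bernoulli(ε) bit, and the label is Y = Majority(X_{d+1}, …, X_{2d}) if C = 1 and Y = X₁ ⊕ Majority(X₂, …, X_d) if C = 0, where Majority(b₁,…,b_m) = 1 iff at least half of the bits are 1. Then: (a) the function f(x) = x₁ ⊕ Majority(x₂, …, x_d) satisfies P(f(X) = Y) ≥ 1 − ε; and (b) every function g : {0,1}^{2d} → {0,1} that depends only on the coordinates x_{d+1}, …, x_{2d} satisfies P(g(X) = Y) = (1 − ε)/2 + ε·P(g(X) = Majority(X_{d+1}, …, X_{2d})) ≤ 1/2 + ε/2. -/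

import Mathlib

/-- Majority vote over the coordinates in `S`: `1` iff at least half of those bits are `1`. -/
def majOn {n : ℕ} (S : Finset (Fin n)) (x : Fin n → Bool) : Bool :=
  decide (S.card ≤ 2 * (S.filter fun i => x i = true).card)

/-- Probability (over `X` uniform on `{0,1}^{2d}` and an independent Bernoulli(ε) bit `C`)
that the classifier `g` agrees with the label
`Y = Majority(X_{d+1},…,X_{2d})` if `C = 1`, and
`Y = X₁ ⊕ Majority(X₂,…,X_d)` if `C = 0`. -/
noncomputable def accSPLIT (d : ℕ) (hd : 1 ≤ d) (ε : ℝ)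
    (g : (Fin (2 * d) → Bool) → Bool) : ℝ :=
  (1 / 2 ^ (2 * d)) * ∑ x : Fin (2 * d) → Bool,
    ((1 - ε) * (if g x = xor (x ⟨0, by omega⟩)
          (majOn (Finset.univ.filter fun i : Fin (2 * d) => 1 ≤ i.val ∧ i.val ≤ d - 1) x)
        then (1 : ℝ) else 0)
      + ε * (if g x = majOn (Finset.univ.filter fun i : Fin (2 * d) => d ≤ i.val) x
        then (1 : ℝ) else 0))

lemma bool_ind_add (a b : Bool) :
    (if a = b then (1:ℝ) else 0) + (if a = !b then (1:ℝ) else 0) = 1 := by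
  cases a <;> cases b <;> simp

lemma card_fun_2d (d : ℕ) : (Fintype.card (Fin (2*d) → Bool) : ℝ) = 2 ^ (2*d) := by
  simp [Fintype.card_fun]

lemma half_sum (d : ℕ) (hd : 2 ≤ d) (g : (Fin (2*d) → Bool) → Bool)
    (hg : ∀ x x' : Fin (2*d) → Bool,
        (∀ i : Fin (2*d), d ≤ i.val → x i = x' i) → g x = g x') :
    ∑ x : Fin (2*d) → Bool,
      (if g x = xor (x ⟨0, Nat.mul_pos two_pos (by omega)⟩)
          (majOn (Finset.univ.filter fun i : Fin (2*d) => 1 ≤ i.val ∧ i.val ≤ d - 1) x)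
        then (1:ℝ) else 0) = 2 ^ (2*d) / 2 := by
  set i0 : Fin (2*d) := ⟨0, Nat.mul_pos two_pos (by omega)⟩ with hi0
  set S1 := Finset.univ.filter fun i : Fin (2*d) => 1 ≤ i.val ∧ i.val ≤ d - 1 with hS1
  set f := fun x : Fin (2*d) → Bool => xor (x i0) (majOn S1 x) with hfdef
  set σ := fun x : Fin (2*d) → Bool => Function.update x i0 (!(x i0)) with hσ
  have hσinv : Function.Involutive σ := by
    intro x
    funext i
    by_cases h : i = i0
    · subst h; simp [σ]
    · simp [σ, Function.update_of_ne h]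
  have hgσ : ∀ x, g (σ x) = g x := by
    intro x
    apply hg
    intro i hi
    have hne : i ≠ i0 := by
      intro h; subst h; simp [hi0] at hi; omega
    simp [σ, Function.update_of_ne hne]
  have hmaj : ∀ x, majOn S1 (σ x) = majOn S1 x := by
    intro x
    unfold majOn
    have : (S1.filter fun i => σ x i = true) = S1.filter fun i => x i = true := by
      apply Finset.filter_congr
      intro i hi
      have hne : i ≠ i0 := by
        simp only [hS1, Finset.mem_filter, Finset.mem_univ, true_and] at hi
        intro h; subst h
        simp [hi0] at hi
      simp [σ, Function.update_of_ne hne]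
    rw [this]
  have hf : ∀ x, f (σ x) = ! f x := by
    intro x
    simp only [hfdef, hmaj]
    have hx0 : σ x i0 = !(x i0) := Function.update_self _ _ _
    rw [hx0]
    cases x i0 <;> cases majOn S1 x <;> rfl
  have hsum2 : ∑ x : Fin (2*d) → Bool, (if g x = f x then (1:ℝ) else 0)
      = ∑ x : Fin (2*d) → Bool, (if g (σ x) = f (σ x) then (1:ℝ) else 0) :=
    Fintype.sum_bijective σ hσinv.bijective _ _ (fun x => by rw [hσinv x])
  have key : (2:ℝ) * ∑ x : Fin (2*d) → Bool, (if g x = f x then (1:ℝ) else 0)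
      = 2 ^ (2*d) := by
    have := hsum2
    have h1 : ∑ x : Fin (2*d) → Bool,
        ((if g x = f x then (1:ℝ) else 0) + (if g (σ x) = f (σ x) then (1:ℝ) else 0))
        = ∑ x : Fin (2*d) → Bool, (1:ℝ) := by
      apply Finset.sum_congr rfl
      intro x _
      rw [hgσ x, hf x]
      exact bool_ind_add (g x) (f x)
    rw [Finset.sum_add_distrib, ← hsum2] at h1
    have h2 : ∑ x : Fin (2*d) → Bool, (1:ℝ) = 2 ^ (2*d) := by
      rw [Finset.sum_const, Finset.card_univ, nsmul_eq_mul, mul_one, card_fun_2d]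
    linarith
  linarith [key]

theorem stmt_13 (d : ℕ) (hd : 2 ≤ d) (ε : ℝ) (hε0 : 0 ≤ ε) (hε1 : ε ≤ 1) :
    (1 - ε ≤ accSPLIT d (by omega) ε
        (fun x => xor (x ⟨0, by omega⟩)
          (majOn (Finset.univ.filter fun i : Fin (2 * d) => 1 ≤ i.val ∧ i.val ≤ d - 1) x))) ∧
    (∀ g : (Fin (2 * d) → Bool) → Bool,
      (∀ x x' : Fin (2 * d) → Bool,
          (∀ i : Fin (2 * d), d ≤ i.val → x i = x' i) → g x = g x') →
      accSPLIT d (by omega) ε g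
          = (1 - ε) / 2 + ε * ((1 / 2 ^ (2 * d)) * ∑ x : Fin (2 * d) → Bool,
              (if g x = majOn (Finset.univ.filter fun i : Fin (2 * d) => d ≤ i.val) x
                then (1 : ℝ) else 0))
        ∧ accSPLIT d (by omega) ε g ≤ 1 / 2 + ε / 2) := by
  have hpow : (0:ℝ) < 2 ^ (2*d) := by positivity
  have hcard : ∑ x : Fin (2*d) → Bool, (1:ℝ) = 2 ^ (2*d) := by
    rw [Finset.sum_const, Finset.card_univ, nsmul_eq_mul, mul_one, card_fun_2d]
  -- generic expansion
  have expand : ∀ g : (Fin (2 * d) → Bool) → Bool,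
      accSPLIT d (by omega) ε g
        = (1 / 2 ^ (2*d)) * ((1 - ε) * ∑ x : Fin (2*d) → Bool,
            (if g x = xor (x ⟨0, by omega⟩)
              (majOn (Finset.univ.filter fun i : Fin (2*d) => 1 ≤ i.val ∧ i.val ≤ d - 1) x)
              then (1:ℝ) else 0)
          + ε * ∑ x : Fin (2*d) → Bool,
            (if g x = majOn (Finset.univ.filter fun i : Fin (2*d) => d ≤ i.val) x
              then (1:ℝ) else 0)) := by
    intro g
    unfold accSPLIT
    rw [Finset.sum_add_distrib, ← Finset.mul_sum, ← Finset.mul_sum]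
  constructor
  · set f := fun x : Fin (2*d) → Bool => xor (x ⟨0, by omega⟩)
        (majOn (Finset.univ.filter fun i : Fin (2*d) => 1 ≤ i.val ∧ i.val ≤ d - 1) x) with hf
    rw [expand f]
    have h1 : ∑ x : Fin (2*d) → Bool,
        (if f x = xor (x ⟨0, by omega⟩)
          (majOn (Finset.univ.filter fun i : Fin (2*d) => 1 ≤ i.val ∧ i.val ≤ d - 1) x)
          then (1:ℝ) else 0) = 2 ^ (2*d) := by
      rw [← hcard]
      apply Finset.sum_congr rfl
      intro x _
      simp [hf]
    rw [h1]
    have h2 : (0:ℝ) ≤ ∑ x : Fin (2*d) → Bool,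
        (if f x = majOn (Finset.univ.filter fun i : Fin (2*d) => d ≤ i.val) x
          then (1:ℝ) else 0) := by
      apply Finset.sum_nonneg; intro x _; positivity
    have h3 : (1 / 2 ^ (2*d)) * ((1 - ε) * 2 ^ (2*d)) = 1 - ε := by
      field_simp
    nlinarith [mul_nonneg hε0 h2, mul_pos (one_div_pos.mpr hpow) hpow]
  · intro g hg
    rw [expand g]
    rw [half_sum d hd g hg]
    have heq : (1 / 2 ^ (2*d) : ℝ) * ((1 - ε) * (2 ^ (2*d) / 2)
          + ε * ∑ x : Fin (2*d) → Bool,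
            (if g x = majOn (Finset.univ.filter fun i : Fin (2*d) => d ≤ i.val) x
              then (1:ℝ) else 0))
        = (1 - ε) / 2 + ε * ((1 / 2 ^ (2*d)) * ∑ x : Fin (2*d) → Bool,
            (if g x = majOn (Finset.univ.filter fun i : Fin (2*d) => d ≤ i.val) x
              then (1:ℝ) else 0)) := by
      rw [mul_add]
      congr 1
      · rw [show (1 / 2 ^ (2*d) : ℝ) * ((1 - ε) * (2 ^ (2*d) / 2)) = (1 - ε) / 2 * (2 ^ (2*d) / 2 ^ (2*d)) by ring, div_self (ne_of_gt hpow), mul_one]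
      · ring
    refine ⟨heq, ?_⟩
    rw [heq]
    have hB : ∑ x : Fin (2*d) → Bool,
        (if g x = majOn (Finset.univ.filter fun i : Fin (2*d) => d ≤ i.val) x
          then (1:ℝ) else 0) ≤ 2 ^ (2*d) := by
      rw [← hcard]
      apply Finset.sum_le_sum
      intro x _
      split <;> norm_num
    have hB0 : (0:ℝ) ≤ ∑ x : Fin (2*d) → Bool,
        (if g x = majOn (Finset.univ.filter fun i : Fin (2*d) => d ≤ i.val) x
          then (1:ℝ) else 0) := by
      apply Finset.sum_nonneg; intro x _; positivity
    have h4 : (1 / 2 ^ (2*d) : ℝ) * ∑ x : Fin (2*d) → Bool,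
        (if g x = majOn (Finset.univ.filter fun i : Fin (2*d) => d ≤ i.val) x
          then (1:ℝ) else 0) ≤ 1 := by
      rw [div_mul_eq_mul_div, one_mul, div_le_one hpow]
      exact hB
    have h5 : ε * ((1 / 2 ^ (2*d) : ℝ) * ∑ x : Fin (2*d) → Bool,
        (if g x = majOn (Finset.univ.filter fun i : Fin (2*d) => d ≤ i.val) x
          then (1:ℝ) else 0)) ≤ ε * 1 :=
      mul_le_mul_of_nonneg_left h4 hε0
    linarith
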